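/- arXiv:1210.2087 — 2 statements merged into one kernel-verified Lean document; each statement's English description precedes it below -/
import Mathlib

section
/- Let d ≥ 1 and let G, G' be real d×d lower triangular matrices; set ΔG := G' − G, H := G Gᵀ and ΔH := G' G'ᵀ − G Gᵀ. Then for every index i one has the exact identity 2 G_{ii} ΔG_{ii} = ΔH_{ii} − 2 Σ_{k<i} G_{ik} ΔG_{ik} − Σ_{k≤i} (ΔG_{ik})², and for all indices i > j one has G_{jj} ΔG_{ij} = ΔH_{ij} − G_{ij} ΔG_{jj} − Σ_{k<j} (G_{ik} ΔG_{jk} + ΔG_{ik} G_{jk}) − Σ_{k≤j} ΔG_{ik} ΔG_{jk}. Consequently, if the diagonal entries of G are positive, then ΔG_{ii} = (ΔH_{ii} − 2 Σ_{k<i} ΔG_{ik} G_{ik})/(2 G_{ii}) + E_{ii} with |E_{ii}| ≤ ‖ΔG‖_F²/(2 G_{ii}), and for i > j, ΔG_{ij} = (ΔH_{ij} − G_{ij} ΔG_{jj} − Σ_{k<j}(ΔG_{jk} G_{ik} + ΔG_{ik} G_{jk}))/G_{jj} + E_{ij} with |E_{ij}| ≤ ‖ΔG‖_F²/G_{jj}.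 -/
open Finset Matrix

/-- Frobenius norm of a real square matrix. -/
noncomputable def frobNorm {d : ℕ} (A : Matrix (Fin d) (Fin d) ℝ) : ℝ :=
  Real.sqrt (∑ i, ∑ j, (A i j) ^ 2)

/-- Exact first-order perturbation recursion for the Cholesky factorization. -/
theorem cholesky_perturbation_recursion {d : ℕ} (hd : 1 ≤ d)
    (G G' : Matrix (Fin d) (Fin d) ℝ)
    (hG : ∀ i j : Fin d, i < j → G i j = 0)
    (hG' : ∀ i j : Fin d, i < j → G' i j = 0)
    (ΔG : Matrix (Fin d) (Fin d) ℝ) (hΔG : ΔG = G' - G)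
    (H : Matrix (Fin d) (Fin d) ℝ) (hH : H = G * Gᵀ)
    (ΔH : Matrix (Fin d) (Fin d) ℝ) (hΔH : ΔH = G' * G'ᵀ - G * Gᵀ) :
    (∀ i : Fin d,
      2 * G i i * ΔG i i =
        ΔH i i - 2 * ∑ k ∈ Finset.Iio i, G i k * ΔG i k
          - ∑ k ∈ Finset.Iic i, (ΔG i k) ^ 2) ∧
    (∀ i j : Fin d, j < i →
      G j j * ΔG i j =
        ΔH i j - G i j * ΔG j j
          - ∑ k ∈ Finset.Iio j, (G i k * ΔG j k + ΔG i k * G j k)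
          - ∑ k ∈ Finset.Iic j, ΔG i k * ΔG j k) ∧
    ((∀ i : Fin d, 0 < G i i) →
      (∀ i : Fin d,
        |ΔG i i - (ΔH i i - 2 * ∑ k ∈ Finset.Iio i, ΔG i k * G i k) / (2 * G i i)|
          ≤ frobNorm ΔG ^ 2 / (2 * G i i)) ∧
      (∀ i j : Fin d, j < i →
        |ΔG i j - (ΔH i j - G i j * ΔG j j
            - ∑ k ∈ Finset.Iio j, (ΔG j k * G i k + ΔG i k * G j k)) / (G j j)|
          ≤ frobNorm ΔG ^ 2 / G j j)) := by
  have hΔ : ∀ i j : Fin d, i < j → ΔG i j = 0 := by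
    intro i j h; simp [hΔG, hG i j h, hG' i j h]
  -- key identity
  have key : ∀ i j : Fin d, j ≤ i →
      ΔH i j = ∑ k ∈ Finset.Iic j,
        (G i k * ΔG j k + ΔG i k * G j k + ΔG i k * ΔG j k) := by
    intro i j hji
    have h1 : ΔH i j = ∑ k : Fin d,
        (G i k * ΔG j k + ΔG i k * G j k + ΔG i k * ΔG j k) := by
      subst hΔH hΔG
      simp only [Matrix.sub_apply, Matrix.mul_apply, Matrix.transpose_apply,
        ← Finset.sum_sub_distrib]
      apply Finset.sum_congr rfl
      intro k _
      ring
    rw [h1]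
    symm
    apply Finset.sum_subset (Finset.subset_univ _)
    intro k _ hk
    have hjk : j < k := lt_of_not_ge (by simpa using hk)
    simp [hΔ j k hjk, hG j k hjk]
  have hsplit : ∀ (j : Fin d) (f : Fin d → ℝ),
      ∑ k ∈ Finset.Iic j, f k = ∑ k ∈ Finset.Iio j, f k + f j := by
    intro j f
    rw [← Finset.Iio_insert, Finset.sum_insert (by simp), add_comm]
  have part1 : ∀ i : Fin d,
      2 * G i i * ΔG i i =
        ΔH i i - 2 * ∑ k ∈ Finset.Iio i, G i k * ΔG i k
          - ∑ k ∈ Finset.Iic i, (ΔG i k) ^ 2 := by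
    intro i
    rw [key i i le_rfl, hsplit i, hsplit i (fun k => (ΔG i k) ^ 2)]
    have : ∑ k ∈ Finset.Iio i, (G i k * ΔG i k + ΔG i k * G i k + ΔG i k * ΔG i k)
        = 2 * ∑ k ∈ Finset.Iio i, G i k * ΔG i k + ∑ k ∈ Finset.Iio i, (ΔG i k) ^ 2 := by
      rw [Finset.mul_sum, ← Finset.sum_add_distrib]
      apply Finset.sum_congr rfl; intro k _; ring
    rw [this]; ring
  have part2 : ∀ i j : Fin d, j < i →
      G j j * ΔG i j =
        ΔH i j - G i j * ΔG j j
          - ∑ k ∈ Finset.Iio j, (G i k * ΔG j k + ΔG i k * G j k)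
          - ∑ k ∈ Finset.Iic j, ΔG i k * ΔG j k := by
    intro i j hji
    rw [key i j hji.le, hsplit j, hsplit j (fun k => ΔG i k * ΔG j k)]
    have : ∑ k ∈ Finset.Iio j, (G i k * ΔG j k + ΔG i k * G j k + ΔG i k * ΔG j k)
        = ∑ k ∈ Finset.Iio j, (G i k * ΔG j k + ΔG i k * G j k)
          + ∑ k ∈ Finset.Iio j, ΔG i k * ΔG j k := by
      rw [← Finset.sum_add_distrib]
    rw [this]; ring
  refine ⟨part1, part2, fun hpos => ?_⟩
  have hfrob : frobNorm ΔG ^ 2 = ∑ i, ∑ j, (ΔG i j) ^ 2 := by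
    unfold frobNorm
    exact Real.sq_sqrt (by positivity)
  have hrow : ∀ (i j : Fin d), ∑ k ∈ Finset.Iic j, (ΔG i k) ^ 2 ≤ frobNorm ΔG ^ 2 := by
    intro i j
    rw [hfrob]
    calc ∑ k ∈ Finset.Iic j, (ΔG i k) ^ 2 ≤ ∑ k : Fin d, (ΔG i k) ^ 2 :=
          Finset.sum_le_sum_of_subset_of_nonneg (Finset.subset_univ _)
            (fun k _ _ => sq_nonneg _)
      _ ≤ ∑ i', ∑ k : Fin d, (ΔG i' k) ^ 2 :=
          Finset.single_le_sum (f := fun i' => ∑ k : Fin d, (ΔG i' k) ^ 2)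
            (fun i' _ => Finset.sum_nonneg fun k _ => sq_nonneg _) (Finset.mem_univ i)
  constructor
  · intro i
    have hGi := hpos i
    have h2 : (0:ℝ) < 2 * G i i := by linarith
    have e1 := part1 i
    have heq : ΔG i i - (ΔH i i - 2 * ∑ k ∈ Finset.Iio i, ΔG i k * G i k) / (2 * G i i)
        = -(∑ k ∈ Finset.Iic i, (ΔG i k) ^ 2) / (2 * G i i) := by
      have hcomm : ∑ k ∈ Finset.Iio i, ΔG i k * G i k
          = ∑ k ∈ Finset.Iio i, G i k * ΔG i k := by
        apply Finset.sum_congr rfl; intro k _; ring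
      rw [hcomm]
      have := h2.ne'
      field_simp
      linear_combination e1
    rw [heq, abs_div, abs_of_pos h2]
    gcongr
    rw [abs_neg, abs_of_nonneg (Finset.sum_nonneg fun k _ => sq_nonneg _)]
    exact hrow i i
  · intro i j hji
    have hGj := hpos j
    have e2 := part2 i j hji
    have heq : ΔG i j - (ΔH i j - G i j * ΔG j j
          - ∑ k ∈ Finset.Iio j, (ΔG j k * G i k + ΔG i k * G j k)) / (G j j)
        = -(∑ k ∈ Finset.Iic j, ΔG i k * ΔG j k) / (G j j) := by
      have hcomm : ∑ k ∈ Finset.Iio j, (ΔG j k * G i k + ΔG i k * G j k)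
          = ∑ k ∈ Finset.Iio j, (G i k * ΔG j k + ΔG i k * G j k) := by
        apply Finset.sum_congr rfl; intro k _; ring
      rw [hcomm]
      have := hGj.ne'
      field_simp
      linear_combination e2
    rw [heq, abs_div, abs_of_pos hGj]
    gcongr
    rw [abs_neg]
    calc |∑ k ∈ Finset.Iic j, ΔG i k * ΔG j k|
        ≤ ∑ k ∈ Finset.Iic j, |ΔG i k * ΔG j k| := Finset.abs_sum_le_sum_abs _ _
      _ ≤ ∑ k ∈ Finset.Iic j, ((ΔG i k) ^ 2 + (ΔG j k) ^ 2) / 2 := by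
          apply Finset.sum_le_sum
          intro k _
          rw [abs_mul]
          nlinarith [sq_nonneg (|ΔG i k| - |ΔG j k|), sq_abs (ΔG i k), sq_abs (ΔG j k),
            abs_nonneg (ΔG i k), abs_nonneg (ΔG j k)]
      _ = (∑ k ∈ Finset.Iic j, (ΔG i k) ^ 2 + ∑ k ∈ Finset.Iic j, (ΔG j k) ^ 2) / 2 := by
          rw [← Finset.sum_add_distrib, Finset.sum_div]
      _ ≤ frobNorm ΔG ^ 2 := by linarith [hrow i j, hrow j j]
end

section
/- Let p, d ≥ 1 and let H : ℝ^p → ℝ^{d×d} be such that H(x) is symmetric for every x, H is twice continuously differentiable with H and its first and second derivatives bounded on ℝ^p, and there exists λ > 0 such that H(x) − λ I is positive semidefinite for every x. Then there exists G : ℝ^p → ℝ^{d×d} such that for every x, G(x) is lower triangular with positive diagonal entries and G(x) G(x)ᵀ = H(x), and G is twice continuously differentiable with G and its first and second derivatives bounded on ℝ^p. -/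
open Finset Matrix


section GoodFramework

variable {E : Type*} [NormedAddCommGroup E] [NormedSpace ℝ E]
variable {F : Type*} [NormedAddCommGroup F] [NormedSpace ℝ F]

/-- `f` is differentiable with `f` and `f'` uniformly bounded. -/
def Good1 (f : E → F) : Prop :=
  Differentiable ℝ f ∧ ∃ C : ℝ, 0 ≤ C ∧ ∀ x, ‖f x‖ ≤ C ∧ ‖fderiv ℝ f x‖ ≤ C

/-- `f` is C² with `f`, `f'`, `f''` uniformly bounded. -/
def Good (f : E → ℝ) : Prop :=
  ContDiff ℝ 2 f ∧ Good1 f ∧ Good1 (fderiv ℝ f)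

lemma good1_const (c : F) : Good1 (fun _ : E => c) := by
  refine ⟨differentiable_const c, ‖c‖, norm_nonneg c, fun x => ?_⟩
  rw [fderiv_fun_const]
  simp

lemma good1_add {f g : E → F} (hf : Good1 f) (hg : Good1 g) :
    Good1 (fun x => f x + g x) := by
  obtain ⟨hfd, Cf, hCf0, hCf⟩ := hf
  obtain ⟨hgd, Cg, hCg0, hCg⟩ := hg
  refine ⟨hfd.add hgd, Cf + Cg, by linarith, fun x => ?_⟩
  rw [fderiv_fun_add (hfd x) (hgd x)]
  constructor
  · exact (norm_add_le _ _).trans (add_le_add (hCf x).1 (hCg x).1)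
  · exact (norm_add_le _ _).trans (add_le_add (hCf x).2 (hCg x).2)

lemma good1_neg {f : E → F} (hf : Good1 f) : Good1 (fun x => -f x) := by
  obtain ⟨hfd, Cf, hCf0, hCf⟩ := hf
  refine ⟨hfd.neg, Cf, hCf0, fun x => ?_⟩
  rw [fderiv_fun_neg]
  simp only [norm_neg]
  exact hCf x

lemma good1_smul {u : E → ℝ} {v : E → F} (hu : Good1 u) (hv : Good1 v) :
    Good1 (fun x => u x • v x) := by
  obtain ⟨hud, Cu, hCu0, hCu⟩ := hu
  obtain ⟨hvd, Cv, hCv0, hCv⟩ := hv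
  refine ⟨hud.smul hvd, 2 * Cu * Cv + Cu * Cv, by positivity, fun x => ?_⟩
  constructor
  · rw [show ‖u x • v x‖ = ‖u x‖ * ‖v x‖ from norm_smul _ _]
    have : ‖u x‖ * ‖v x‖ ≤ Cu * Cv :=
      mul_le_mul (hCu x).1 (hCv x).1 (norm_nonneg _) hCu0
    nlinarith [norm_nonneg (u x), norm_nonneg (v x)]
  · rw [fderiv_fun_smul (hud x) (hvd x)]
    refine (norm_add_le _ _).trans ?_
    have h1 : ‖u x • fderiv ℝ v x‖ ≤ Cu * Cv := by
      have e1 : ‖u x • fderiv ℝ v x‖ = ‖u x‖ * ‖fderiv ℝ v x‖ := norm_smul (u x) (fderiv ℝ v x)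
      rw [e1]
      exact mul_le_mul (hCu x).1 (hCv x).2 (norm_nonneg _) hCu0
    have h2 : ‖(fderiv ℝ u x).smulRight (v x)‖ ≤ Cu * Cv := by
      rw [ContinuousLinearMap.norm_smulRight_apply]
      exact mul_le_mul (hCu x).2 (hCv x).1 (norm_nonneg _) hCu0
    nlinarith [norm_nonneg (u x)]

lemma good1_mul {u v : E → ℝ} (hu : Good1 u) (hv : Good1 v) :
    Good1 (fun x => u x * v x) := good1_smul hu hv

lemma good1_inv {u : E → ℝ} {c : ℝ} (hc : 0 < c) (hcu : ∀ x, c ≤ u x)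
    (hu : Good1 u) : Good1 (fun x => (u x)⁻¹) := by
  obtain ⟨hud, Cu, hCu0, hCu⟩ := hu
  have hne : ∀ x, u x ≠ 0 := fun x => (hc.trans_le (hcu x)).ne'
  have hfd : ∀ x, HasFDerivAt (fun y => (u y)⁻¹) ((-(u x ^ 2)⁻¹) • fderiv ℝ u x) x :=
    fun x => (hasDerivAt_inv (hne x)).comp_hasFDerivAt x (hud x).hasFDerivAt
  have hnn : (0:ℝ) ≤ c⁻¹ := inv_nonneg.mpr hc.le
  refine ⟨fun x => (hfd x).differentiableAt, max c⁻¹ ((c ^ 2)⁻¹ * Cu),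
    le_max_of_le_left hnn, fun x => ?_⟩
  have hux : 0 < u x := hc.trans_le (hcu x)
  constructor
  · refine le_max_of_le_left ?_
    rw [Real.norm_eq_abs, abs_of_pos (inv_pos.mpr hux)]
    exact inv_anti₀ hc (hcu x)
  · refine le_max_of_le_right ?_
    have e1 : ‖(-(u x ^ 2)⁻¹) • fderiv ℝ u x‖ = ‖-(u x ^ 2)⁻¹‖ * ‖fderiv ℝ u x‖ := norm_smul (-(u x ^ 2)⁻¹) (fderiv ℝ u x)
    rw [(hfd x).fderiv, e1]
    have h1 : ‖-(u x ^ 2)⁻¹‖ ≤ (c ^ 2)⁻¹ := by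
      rw [norm_neg, Real.norm_eq_abs, abs_of_pos (inv_pos.mpr (by positivity))]
      exact inv_anti₀ (by positivity) (by nlinarith [hcu x])
    exact mul_le_mul h1 (hCu x).2 (norm_nonneg _) (inv_nonneg.mpr (by positivity))

lemma good1_sqrt {u : E → ℝ} {c : ℝ} (hc : 0 < c) (hcu : ∀ x, c ≤ u x)
    (hu : Good1 u) : Good1 (fun x => Real.sqrt (u x)) := by
  obtain ⟨hud, Cu, hCu0, hCu⟩ := hu
  have hne : ∀ x, u x ≠ 0 := fun x => (hc.trans_le (hcu x)).ne'
  have hfd : ∀ x, HasFDerivAt (fun y => Real.sqrt (u y))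
      ((1 / (2 * Real.sqrt (u x))) • fderiv ℝ u x) x :=
    fun x => (Real.hasDerivAt_sqrt (hne x)).comp_hasFDerivAt x (hud x).hasFDerivAt
  refine ⟨fun x => (hfd x).differentiableAt,
    max (Real.sqrt Cu) ((2 * Real.sqrt c)⁻¹ * Cu),
    le_max_of_le_left (Real.sqrt_nonneg _), fun x => ?_⟩
  have hcx : 0 < Real.sqrt (u x) := Real.sqrt_pos.mpr (hc.trans_le (hcu x))
  constructor
  · refine le_max_of_le_left ?_
    rw [Real.norm_eq_abs, abs_of_pos hcx]
    refine Real.sqrt_le_sqrt ?_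
    calc u x ≤ |u x| := le_abs_self _
      _ ≤ Cu := by rw [← Real.norm_eq_abs]; exact (hCu x).1
  · refine le_max_of_le_right ?_
    have e1 : ‖(1 / (2 * Real.sqrt (u x))) • fderiv ℝ u x‖ =
        ‖1 / (2 * Real.sqrt (u x))‖ * ‖fderiv ℝ u x‖ := norm_smul (1 / (2 * Real.sqrt (u x))) (fderiv ℝ u x)
    rw [(hfd x).fderiv, e1]
    have h1 : ‖1 / (2 * Real.sqrt (u x))‖ ≤ (2 * Real.sqrt c)⁻¹ := by
      rw [Real.norm_eq_abs, one_div, abs_of_pos (by positivity)]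
      refine inv_anti₀ (by positivity) ?_
      have := Real.sqrt_le_sqrt (hcu x)
      linarith
    exact mul_le_mul h1 (hCu x).2 (norm_nonneg _)
      (inv_nonneg.mpr (by positivity))

end GoodFramework

section GoodLemmas

variable {E : Type*} [NormedAddCommGroup E] [NormedSpace ℝ E]

lemma contDiff_fderiv_of_two {f : E → ℝ} (hf : ContDiff ℝ 2 f) :
    ContDiff ℝ 1 (fderiv ℝ f) :=
  hf.fderiv_right (m := 1) (by norm_num)

lemma diff_fderiv_of_two {f : E → ℝ} (hf : ContDiff ℝ 2 f) :
    Differentiable ℝ (fderiv ℝ f) :=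
  (contDiff_fderiv_of_two hf).differentiable one_ne_zero

lemma good_const (c : ℝ) : Good (fun _ : E => c) := by
  refine ⟨contDiff_const, good1_const c, ?_⟩
  have : fderiv ℝ (fun _ : E => c) = fun _ : E => (0 : E →L[ℝ] ℝ) := by
    funext x; exact fderiv_const_apply c
  rw [this]
  exact good1_const 0

lemma good_add {f g : E → ℝ} (hf : Good f) (hg : Good g) : Good (fun x => f x + g x) := by
  obtain ⟨hf2, hf1, hf1'⟩ := hf
  obtain ⟨hg2, hg1, hg1'⟩ := hg
  refine ⟨hf2.add hg2, good1_add hf1 hg1, ?_⟩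
  have : fderiv ℝ (fun x => f x + g x) = fun x => fderiv ℝ f x + fderiv ℝ g x := by
    funext x; exact fderiv_add (hf1.1 x) (hg1.1 x)
  rw [this]
  exact good1_add hf1' hg1'

lemma good_neg {f : E → ℝ} (hf : Good f) : Good (fun x => -f x) := by
  obtain ⟨hf2, hf1, hf1'⟩ := hf
  refine ⟨hf2.neg, good1_neg hf1, ?_⟩
  have : fderiv ℝ (fun x => -f x) = fun x => -fderiv ℝ f x := by
    funext x; exact fderiv_neg
  rw [this]
  exact good1_neg hf1'

lemma good_sub {f g : E → ℝ} (hf : Good f) (hg : Good g) : Good (fun x => f x - g x) := by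
  have := good_add hf (good_neg hg)
  simpa [sub_eq_add_neg] using this

lemma good_mul {f g : E → ℝ} (hf : Good f) (hg : Good g) : Good (fun x => f x * g x) := by
  obtain ⟨hf2, hf1, hf1'⟩ := hf
  obtain ⟨hg2, hg1, hg1'⟩ := hg
  refine ⟨hf2.mul hg2, good1_mul hf1 hg1, ?_⟩
  have : fderiv ℝ (fun x => f x * g x) =
      fun x => f x • fderiv ℝ g x + g x • fderiv ℝ f x := by
    funext x; exact fderiv_mul (hf1.1 x) (hg1.1 x)
  rw [this]
  exact good1_add (good1_smul hf1 hg1') (good1_smul hg1 hf1')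

lemma good_sum {ι : Type*} (s : Finset ι) (f : ι → E → ℝ) (hf : ∀ i ∈ s, Good (f i)) :
    Good (fun x => ∑ i ∈ s, f i x) := by
  classical
  induction s using Finset.induction_on with
  | empty => simpa using good_const 0
  | insert _ _ hni ih =>
    rename_i a s'
    have : (fun x => ∑ i ∈ insert a s', f i x) = fun x => f a x + ∑ i ∈ s', f i x := by
      funext x; exact Finset.sum_insert hni
    rw [this]
    exact good_add (hf a (Finset.mem_insert_self a s'))
      (ih fun i hi => hf i (Finset.mem_insert_of_mem hi))

lemma good_inv {f : E → ℝ} {c : ℝ} (hc : 0 < c) (hcf : ∀ x, c ≤ f x) (hf : Good f) :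
    Good (fun x => (f x)⁻¹) := by
  obtain ⟨hf2, hf1, hf1'⟩ := hf
  have hne : ∀ x, f x ≠ 0 := fun x => (hc.trans_le (hcf x)).ne'
  refine ⟨hf2.inv hne, good1_inv hc hcf hf1, ?_⟩
  have hform : fderiv ℝ (fun x => (f x)⁻¹) =
      fun x => (-(f x ^ 2)⁻¹) • fderiv ℝ f x := by
    funext x
    exact ((hasDerivAt_inv (hne x)).comp_hasFDerivAt x (hf1.1 x).hasFDerivAt).fderiv
  rw [hform]
  refine good1_smul ?_ hf1'
  have hsq : Good1 (fun x => f x * f x) := good1_mul hf1 hf1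
  have : (fun x => -(f x ^ 2)⁻¹) = fun x => -((fun x => (f x * f x)⁻¹) x) := by
    funext x; rw [pow_two]
  rw [this]
  exact good1_neg (good1_inv (by positivity : (0:ℝ) < c * c)
    (fun x => mul_le_mul (hcf x) (hcf x) hc.le (hc.le.trans (hcf x))) hsq)

lemma good_sqrt {f : E → ℝ} {c : ℝ} (hc : 0 < c) (hcf : ∀ x, c ≤ f x) (hf : Good f) :
    Good (fun x => Real.sqrt (f x)) := by
  obtain ⟨hf2, hf1, hf1'⟩ := hf
  have hne : ∀ x, f x ≠ 0 := fun x => (hc.trans_le (hcf x)).ne'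
  have hcd : ContDiff ℝ 2 (fun x => Real.sqrt (f x)) := by
    rw [contDiff_iff_contDiffAt]
    intro x
    exact (Real.contDiffAt_sqrt (hne x)).comp x hf2.contDiffAt
  refine ⟨hcd, good1_sqrt hc hcf hf1, ?_⟩
  have hform : fderiv ℝ (fun x => Real.sqrt (f x)) =
      fun x => (1 / (2 * Real.sqrt (f x))) • fderiv ℝ f x := by
    funext x
    exact ((Real.hasDerivAt_sqrt (hne x)).comp_hasFDerivAt x (hf1.1 x).hasFDerivAt).fderiv
  rw [hform]
  refine good1_smul ?_ hf1'
  have hsg : Good1 (fun x => 2 * Real.sqrt (f x)) :=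
    good1_mul (good1_const 2) (good1_sqrt hc hcf hf1)
  have : (fun x => 1 / (2 * Real.sqrt (f x))) = fun x => ((fun x => 2 * Real.sqrt (f x)) x)⁻¹ := by
    funext x; rw [one_div]
  rw [this]
  refine good1_inv (c := 2 * Real.sqrt c) (by positivity) (fun x => ?_) hsg
  have := Real.sqrt_le_sqrt (hcf x)
  linarith

end GoodLemmas


lemma exists_cholesky {d : ℕ} (A : Matrix (Fin d) (Fin d) ℝ) (hA : A.PosDef) :
    ∃ L : Matrix (Fin d) (Fin d) ℝ,
      (∀ i j : Fin d, i < j → L i j = 0) ∧ (∀ i, 0 < L i i) ∧ L * Lᵀ = A := by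
  letI instd : DecidableEq (Fin d) := fun a b => LinearOrder.toDecidableEq a b
  haveI hwf : WellFoundedLT (Fin d) := inferInstance
  set Li := @LDL.lowerInv ℝ _ (Fin d) _ hwf _ A _ hA with hLi
  haveI : Invertible Li := @LDL.invertibleLowerInv ℝ _ (Fin d) _ hwf _ A _ hA
  set dg := @LDL.diagEntries ℝ _ (Fin d) _ hwf _ A _ hA with hdg
  have hdiag : Matrix.diagonal dg = Li * A * Liᵀ := by
    have h1 := @LDL.diag_eq_lowerInv_conj ℝ _ (Fin d) _ hwf _ A _ hA
    rw [LDL.diag, Matrix.conjTranspose_eq_transpose_of_trivial] at h1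
    exact h1
  have hLitri : Li.BlockTriangular OrderDual.toDual := fun i j hij =>
    @LDL.lowerInv_triangular ℝ _ (Fin d) _ hwf _ A _ hA _ _ hij
  have hpsd : (Matrix.diagonal dg).PosSemidef := by
    rw [hdiag]
    have := hA.posSemidef.mul_mul_conjTranspose_same Li
    rwa [Matrix.conjTranspose_eq_transpose_of_trivial] at this
  have hnonneg : ∀ i, 0 ≤ dg i := posSemidef_diagonal_iff.mp hpsd
  have hdetLi : IsUnit Li.det := Matrix.isUnit_det_of_invertible Li
  have hdetA : A.det ≠ 0 := ne_of_gt hA.det_pos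
  have hdet : (Matrix.diagonal dg).det ≠ 0 := by
    rw [hdiag, Matrix.det_mul, Matrix.det_mul, Matrix.det_transpose]
    exact mul_ne_zero (mul_ne_zero hdetLi.ne_zero hdetA) hdetLi.ne_zero
  have hpos : ∀ i, 0 < dg i := by
    intro i
    rcases lt_or_eq_of_le (hnonneg i) with h | h
    · exact h
    · exact absurd (by rw [Matrix.det_diagonal]
                       exact Finset.prod_eq_zero (Finset.mem_univ i) h.symm) hdet
  have hdetLiT : IsUnit (Liᵀ).det := by rw [Matrix.det_transpose]; exact hdetLi
  set L0 : Matrix (Fin d) (Fin d) ℝ :=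
    Li⁻¹ * Matrix.diagonal (fun i => Real.sqrt (dg i)) with hL0
  have hL0tri : L0.BlockTriangular OrderDual.toDual :=
    (Matrix.blockTriangular_inv_of_blockTriangular hLitri).mul
      (Matrix.blockTriangular_diagonal _)
  have hL0fact : L0 * L0ᵀ = A := by
    have hd2 : (fun i => Real.sqrt (dg i) * Real.sqrt (dg i)) = dg :=
      funext fun i => Real.mul_self_sqrt (hnonneg i)
    calc L0 * L0ᵀ
        = Li⁻¹ * (Matrix.diagonal (fun i => Real.sqrt (dg i)) *
            Matrix.diagonal (fun i => Real.sqrt (dg i))) * (Li⁻¹)ᵀ := by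
          rw [hL0, Matrix.transpose_mul, Matrix.diagonal_transpose]
          noncomm_ring
      _ = Li⁻¹ * Matrix.diagonal dg * (Liᵀ)⁻¹ := by
          rw [Matrix.diagonal_mul_diagonal, hd2, Matrix.transpose_nonsing_inv]
      _ = Li⁻¹ * (Li * A * Liᵀ) * (Liᵀ)⁻¹ := by rw [hdiag]
      _ = (Li⁻¹ * Li) * A * (Liᵀ * (Liᵀ)⁻¹) := by noncomm_ring
      _ = A := by
          rw [Matrix.nonsing_inv_mul _ hdetLi, Matrix.mul_nonsing_inv _ hdetLiT,
            Matrix.one_mul, Matrix.mul_one]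
  have hL0diag : ∀ i, L0 i i ≠ 0 := by
    intro i hzero
    have hdet0 : L0.det = 0 := by
      rw [Matrix.det_of_lowerTriangular L0 hL0tri]
      exact Finset.prod_eq_zero (Finset.mem_univ i) hzero
    have : A.det = 0 := by
      rw [← hL0fact, Matrix.det_mul, Matrix.det_transpose, hdet0, zero_mul]
    exact hdetA this
  set s : Fin d → ℝ := fun i => if L0 i i < 0 then -1 else 1 with hs
  have hss : ∀ i, s i * s i = 1 := by
    intro i; by_cases h : L0 i i < 0 <;> simp [hs, h]
  refine ⟨L0 * Matrix.diagonal s, ?_, ?_, ?_⟩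
  · intro i j hij
    exact (hL0tri.mul (Matrix.blockTriangular_diagonal _)) hij
  · intro i
    rw [Matrix.mul_diagonal]
    rcases lt_trichotomy (L0 i i) 0 with h | h | h
    · simp only [hs, if_pos h]; nlinarith
    · exact absurd h (hL0diag i)
    · simp only [hs, if_neg (not_lt.mpr h.le)]; nlinarith
  · calc L0 * Matrix.diagonal s * (L0 * Matrix.diagonal s)ᵀ
        = L0 * (Matrix.diagonal s * Matrix.diagonal s) * L0ᵀ := by
          rw [Matrix.transpose_mul, Matrix.diagonal_transpose]; noncomm_ring
      _ = L0 * L0ᵀ := by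
          rw [Matrix.diagonal_mul_diagonal]
          have : (fun i => s i * s i) = fun _ => (1:ℝ) := funext hss
          rw [this, Matrix.diagonal_one, Matrix.mul_one]
      _ = A := hL0fact


lemma cholesky_diag_ge {d : ℕ} (A L : Matrix (Fin d) (Fin d) ℝ) {lam : ℝ} (hlam : 0 < lam)
    (hnd : (A - lam • (1 : Matrix (Fin d) (Fin d) ℝ)).PosSemidef)
    (htri : ∀ i j : Fin d, i < j → L i j = 0) (hdpos : ∀ i, 0 < L i i)
    (hfact : L * Lᵀ = A) : ∀ j, Real.sqrt lam ≤ L j j := by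
  intro j
  have hLtri : L.BlockTriangular OrderDual.toDual := fun i k hik => htri i k hik
  have hdet : IsUnit L.det := by
    rw [Matrix.det_of_lowerTriangular L hLtri]
    exact (Finset.prod_pos (fun i _ => hdpos i)).ne'.isUnit
  haveI : Invertible L := L.invertibleOfIsUnitDet hdet
  have hinvtri : (L⁻¹).BlockTriangular OrderDual.toDual :=
    Matrix.blockTriangular_inv_of_blockTriangular hLtri
  have hinvmul : L⁻¹ * L = 1 := Matrix.nonsing_inv_mul L hdet
  have hinvdiag : L⁻¹ j j = (L j j)⁻¹ := by
    have h1 : (L⁻¹ * L) j j = 1 := by rw [hinvmul]; simp [Matrix.one_apply]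
    rw [Matrix.mul_apply] at h1
    rw [Finset.sum_eq_single j] at h1
    · exact eq_inv_of_mul_eq_one_left h1
    · intro k _ hk
      rcases lt_or_gt_of_ne hk with h | h
      · rw [htri k j h, mul_zero]
      · rw [hinvtri (show OrderDual.toDual k < OrderDual.toDual j from h), zero_mul]
    · simp
  set v : Fin d → ℝ := fun i => L⁻¹ j i with hv
  have hw : Lᵀ *ᵥ v = fun k => (1 : Matrix (Fin d) (Fin d) ℝ) j k := by
    funext k
    rw [← hinvmul, Matrix.mul_apply]
    simp [Matrix.mulVec, dotProduct, hv, Matrix.transpose_apply, mul_comm]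
  have hquad : v ⬝ᵥ (A *ᵥ v) = 1 := by
    rw [← hfact, ← Matrix.mulVec_mulVec, Matrix.dotProduct_mulVec, ← Matrix.mulVec_transpose, hw]
    simp [dotProduct, Matrix.one_apply]
  have hpsd := hnd.dotProduct_mulVec_nonneg v
  have hvv : v ⬝ᵥ v ≤ 1 / lam := by
    simp only [Matrix.sub_mulVec, dotProduct_sub, Matrix.smul_mulVec,
      Matrix.one_mulVec, dotProduct_smul, star_trivial, hquad] at hpsd
    have h5 : lam * (v ⬝ᵥ v) ≤ 1 := by simpa [smul_eq_mul] using hpsd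
    rw [le_div_iff₀ hlam]; linarith
  have hvj : v j ^ 2 ≤ v ⬝ᵥ v := by
    rw [dotProduct]
    have h6 := Finset.single_le_sum (f := fun i => v i * v i)
      (fun i _ => mul_self_nonneg (v i)) (Finset.mem_univ j)
    rw [pow_two]
    simpa using h6
  have hLj := hdpos j
  have h2 : (L j j)⁻¹ ^ 2 ≤ 1 / lam := by
    calc (L j j)⁻¹ ^ 2 = v j ^ 2 := by rw [hv]; simp [hinvdiag]
      _ ≤ v ⬝ᵥ v := hvj
      _ ≤ 1 / lam := hvv
  have h3 : lam ≤ (L j j) ^ 2 := by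
    have hL2 : 0 < (L j j) ^ 2 := by positivity
    rw [inv_pow, one_div] at h2
    exact (inv_le_inv₀ hL2 hlam).mp h2
  calc Real.sqrt lam ≤ Real.sqrt ((L j j)^2) := Real.sqrt_le_sqrt h3
    _ = L j j := Real.sqrt_sq hLj.le


/-- C² regularity with bounded derivatives of the Cholesky factor of a C²-bounded,
uniformly nondegenerate symmetric-matrix-valued map. -/
theorem cholesky_factor_regularity {p d : ℕ} (hp : 1 ≤ p) (hd : 1 ≤ d)
    (H : EuclideanSpace ℝ (Fin p) → Matrix (Fin d) (Fin d) ℝ)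
    (hsymm : ∀ x, (H x).IsSymm)
    (hC2 : ∀ i j : Fin d, ContDiff ℝ 2 (fun x => H x i j))
    (hbdd : ∃ C : ℝ, ∀ x, ∀ i j : Fin d,
      |H x i j| ≤ C ∧ ‖fderiv ℝ (fun x => H x i j) x‖ ≤ C ∧
        ‖fderiv ℝ (fderiv ℝ (fun x => H x i j)) x‖ ≤ C)
    (lam : ℝ) (hlam : 0 < lam)
    (hnd : ∀ x, (H x - lam • (1 : Matrix (Fin d) (Fin d) ℝ)).PosSemidef) :
    ∃ G : EuclideanSpace ℝ (Fin p) → Matrix (Fin d) (Fin d) ℝ,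
      (∀ x, ∀ i j : Fin d, i < j → G x i j = 0) ∧
      (∀ x, ∀ i : Fin d, 0 < G x i i) ∧
      (∀ x, G x * (G x)ᵀ = H x) ∧
      (∀ i j : Fin d, ContDiff ℝ 2 (fun x => G x i j)) ∧
      (∃ C : ℝ, ∀ x, ∀ i j : Fin d,
        |G x i j| ≤ C ∧ ‖fderiv ℝ (fun x => G x i j) x‖ ≤ C ∧
          ‖fderiv ℝ (fderiv ℝ (fun x => G x i j)) x‖ ≤ C) := by
  classical
  have hd0 : 0 < d := hd
  -- positive definiteness of H x
  have hpd : ∀ x, (H x).PosDef := by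
    intro x
    have h1 : lam • (1 : Matrix (Fin d) (Fin d) ℝ) =
        Matrix.diagonal (fun _ => lam) := by
      ext i j
      by_cases h : i = j <;> simp [h, Matrix.one_apply, Matrix.diagonal_apply]
    have h2 : (lam • (1 : Matrix (Fin d) (Fin d) ℝ)).PosDef := by
      rw [h1]; exact Matrix.PosDef.diagonal fun _ => hlam
    have h3 := Matrix.PosDef.posSemidef_add (hnd x) h2
    simpa using h3
  -- the pointwise Cholesky factor
  set G : EuclideanSpace ℝ (Fin p) → Matrix (Fin d) (Fin d) ℝ :=
    fun x => (exists_cholesky (H x) (hpd x)).choose with hG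
  have htri : ∀ x, ∀ i j : Fin d, i < j → G x i j = 0 :=
    fun x => (exists_cholesky (H x) (hpd x)).choose_spec.1
  have hpos : ∀ x, ∀ i : Fin d, 0 < G x i i :=
    fun x => (exists_cholesky (H x) (hpd x)).choose_spec.2.1
  have hfact : ∀ x, G x * (G x)ᵀ = H x :=
    fun x => (exists_cholesky (H x) (hpd x)).choose_spec.2.2
  have hdge : ∀ x (j : Fin d), Real.sqrt lam ≤ G x j j := fun x =>
    cholesky_diag_ge (H x) (G x) hlam (hnd x) (htri x) (hpos x) (hfact x)
  have hsl : 0 < Real.sqrt lam := Real.sqrt_pos.mpr hlam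
  -- entrywise factorization identity
  have hent : ∀ x, ∀ i j : Fin d, j ≤ i →
      H x i j = (∑ k ∈ Finset.univ.filter (· < j), G x i k * G x j k)
        + G x i j * G x j j := by
    intro x i j hji
    have h1 : H x i j = ∑ k, G x i k * G x j k := by
      rw [← hfact x, Matrix.mul_apply]
      simp [Matrix.transpose_apply]
    rw [h1, ← Finset.sum_filter_add_sum_filter_not Finset.univ (· < j)]
    congr 1
    rw [Finset.sum_eq_single_of_mem j (by simp)]
    intro k hk hkj
    have h2 : ¬ k < j := (Finset.mem_filter.mp hk).2
    have h3 : j < k := lt_of_le_of_ne (not_lt.mp h2) (Ne.symm hkj)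
    rw [htri x j k h3, mul_zero]
  -- diagonal recursion
  have R1 : ∀ x (j : Fin d),
      lam ≤ H x j j - ∑ k ∈ Finset.univ.filter (· < j), G x j k * G x j k ∧
      G x j j = Real.sqrt
        (H x j j - ∑ k ∈ Finset.univ.filter (· < j), G x j k * G x j k) := by
    intro x j
    have h1 := hent x j j le_rfl
    have h2 : H x j j - (∑ k ∈ Finset.univ.filter (· < j), G x j k * G x j k)
        = G x j j * G x j j := by linarith
    constructor
    · rw [h2]
      nlinarith [hdge x j, Real.sq_sqrt hlam.le, Real.sqrt_nonneg lam]
    · rw [h2, Real.sqrt_mul_self (hpos x j).le]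
  -- off-diagonal recursion
  have R2 : ∀ x, ∀ i j : Fin d, j < i →
      G x i j = (H x i j - ∑ k ∈ Finset.univ.filter (· < j), G x i k * G x j k)
        * (G x j j)⁻¹ := by
    intro x i j hji
    have h1 := hent x i j hji.le
    have h2 : G x j j ≠ 0 := (hpos x j).ne'
    field_simp
    linarith
  -- the entries of H are Good
  obtain ⟨C0, hC0⟩ := hbdd
  have goodH : ∀ i j : Fin d, Good (fun x => H x i j) := by
    intro i j
    refine ⟨hC2 i j, ⟨(hC2 i j).differentiable (by norm_num), max C0 0,
      le_max_right _ _, fun x => ?_⟩,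
      ⟨diff_fderiv_of_two (hC2 i j), max C0 0, le_max_right _ _, fun x => ?_⟩⟩
    · exact ⟨by rw [Real.norm_eq_abs]; exact (hC0 x i j).1.trans (le_max_left _ _),
        (hC0 x i j).2.1.trans (le_max_left _ _)⟩
    · exact ⟨(hC0 x i j).2.1.trans (le_max_left _ _),
        (hC0 x i j).2.2.trans (le_max_left _ _)⟩
  -- main induction: all entries of G are Good
  have main : ∀ n : ℕ, ∀ i j : Fin d, (j : ℕ) * d + (i : ℕ) = n →
      Good (fun x => G x i j) := by
    intro n
    induction n using Nat.strong_induction_on with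
    | _ n IH =>
      intro i j hn
      rcases lt_trichotomy i j with hij | hij | hij
      · have h1 : (fun x => G x i j) = fun _ => (0:ℝ) :=
          funext fun x => htri x i j hij
        rw [h1]; exact good_const 0
      · subst hij
        have heq : (fun x => G x i i) = fun x => Real.sqrt
            (H x i i - ∑ k ∈ Finset.univ.filter (· < i), G x i k * G x i k) :=
          funext fun x => (R1 x i).2
        rw [heq]
        refine good_sqrt hlam (fun x => (R1 x i).1) ?_
        refine good_sub (goodH i i) (good_sum _ _ ?_)
        intro k hk
        have hki : (k:ℕ) < (i:ℕ) := (Finset.mem_filter.mp hk).2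
        have h1 : (k:ℕ)*d + d ≤ (i:ℕ)*d := by
          rw [← Nat.succ_mul]; exact Nat.mul_le_mul_right d hki
        have h2 : (i:ℕ) < d := i.isLt
        have hm : (k:ℕ) * d + (i:ℕ) < n := by linarith
        exact good_mul (IH _ hm i k rfl) (IH _ hm i k rfl)
      · have heq : (fun x => G x i j) = fun x =>
            (H x i j - ∑ k ∈ Finset.univ.filter (· < j), G x i k * G x j k)
              * (G x j j)⁻¹ :=
          funext fun x => R2 x i j hij
        rw [heq]
        have hji : (j:ℕ) < (i:ℕ) := hij
        have hidd : (i:ℕ) < d := i.isLt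
        have hjj : (j:ℕ) * d + (j:ℕ) < n := by linarith
        refine good_mul (good_sub (goodH i j) (good_sum _ _ ?_))
          (good_inv hsl (fun x => hdge x j) (IH _ hjj j j rfl))
        intro k hk
        have hkj : (k:ℕ) < (j:ℕ) := (Finset.mem_filter.mp hk).2
        have h1 : (k:ℕ)*d + d ≤ (j:ℕ)*d := by
          rw [← Nat.succ_mul]; exact Nat.mul_le_mul_right d hkj
        have hjd : (j:ℕ) < d := j.isLt
        have hm1 : (k:ℕ) * d + (i:ℕ) < n := by linarith
        have hm2 : (k:ℕ) * d + (j:ℕ) < n := by linarith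
        exact good_mul (IH _ hm1 i k rfl) (IH _ hm2 j k rfl)
  have goodG : ∀ i j : Fin d, Good (fun x => G x i j) := fun i j => main _ i j rfl
  refine ⟨G, htri, hpos, hfact, fun i j => (goodG i j).1, ?_⟩
  have hB : ∀ i j : Fin d, ∃ C : ℝ, 0 ≤ C ∧ ∀ x,
      |G x i j| ≤ C ∧ ‖fderiv ℝ (fun x => G x i j) x‖ ≤ C ∧
        ‖fderiv ℝ (fderiv ℝ (fun x => G x i j)) x‖ ≤ C := by
    intro i j
    obtain ⟨_, ⟨_, C1, hC10, h1⟩, ⟨_, C2, hC20, h2⟩⟩ := goodG i j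
    refine ⟨max C1 C2, le_max_of_le_left hC10, fun x => ?_⟩
    refine ⟨?_, (h2 x).1.trans (le_max_right _ _), (h2 x).2.trans (le_max_right _ _)⟩
    rw [← Real.norm_eq_abs]
    exact (h1 x).1.trans (le_max_left _ _)
  choose C hCnn hC using hB
  refine ⟨∑ i : Fin d, ∑ j : Fin d, C i j, fun x i j => ?_⟩
  have hle : C i j ≤ ∑ i' : Fin d, ∑ j' : Fin d, C i' j' := by
    have h1 : C i j ≤ ∑ j' : Fin d, C i j' :=
      Finset.single_le_sum (fun k _ => hCnn i k) (Finset.mem_univ j)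
    have h2 : (∑ j' : Fin d, C i j') ≤ ∑ i' : Fin d, ∑ j' : Fin d, C i' j' :=
      Finset.single_le_sum (f := fun i' => ∑ j' : Fin d, C i' j')
        (fun i' _ => Finset.sum_nonneg fun k _ => hCnn i' k) (Finset.mem_univ i)
    linarith
  exact ⟨(hC i j x).1.trans hle, (hC i j x).2.1.trans hle, (hC i j x).2.2.trans hle⟩
end
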